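/- arXiv:2110.13646 — 2 statements merged into one kernel-verified Lean document; each statement's English description precedes it below -/
import Mathlib

section
/- If a, b, c, d are complex numbers of modulus one with a + b + c + d = 0, then a = -b or a = -c or a = -d. -/
theorem sum_four_unimodular_eq_zero
    (a b c d : ℂ) (ha : ‖a‖ = 1) (hb : ‖b‖ = 1)
    (hc : ‖c‖ = 1) (hd : ‖d‖ = 1)
    (h : a + b + c + d = 0) :
    a = -b ∨ a = -c ∨ a = -d := by
  have ha0 : a ≠ 0 := by intro h0; simp [h0] at ha
  have hb0 : b ≠ 0 := by intro h0; simp [h0] at hb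
  have hc0 : c ≠ 0 := by intro h0; simp [h0] at hc
  have hd0 : d ≠ 0 := by intro h0; simp [h0] at hd
  have hca : (starRingEnd ℂ) a = a⁻¹ := (Complex.inv_eq_conj ha).symm
  have hcb : (starRingEnd ℂ) b = b⁻¹ := (Complex.inv_eq_conj hb).symm
  have hcc : (starRingEnd ℂ) c = c⁻¹ := (Complex.inv_eq_conj hc).symm
  have hcd : (starRingEnd ℂ) d = d⁻¹ := (Complex.inv_eq_conj hd).symm
  have h2 := congrArg (starRingEnd ℂ) h
  simp only [map_add, map_zero, hca, hcb, hcc, hcd] at h2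
  have h3 : b*c*d + a*c*d + a*b*d + a*b*c = 0 := by
    field_simp at h2
    linear_combination h2
  have key : (a + b) * (a + c) * (a + d) = 0 := by
    linear_combination a^2 * h + h3
  rcases mul_eq_zero.mp key with hk | hk
  · rcases mul_eq_zero.mp hk with hk' | hk'
    · exact Or.inl (by linear_combination hk')
    · exact Or.inr (Or.inl (by linear_combination hk'))
  · exact Or.inr (Or.inr (by linear_combination hk))
end

section
/- Björck's circulant matrix C₆ with first row (1, id, -d, -i, -d̄, id̄), where d = (1-√3)/2 + i·√(√3/2), is a 6×6 complex Hadamard matrix. In particular |d| = 1. -/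
open Matrix Complex

/-- An `n × n` complex Hadamard matrix: `Hᴴ * H = n • 1` and all entries unimodular. -/
def IsCHM (n : ℕ) (H : Matrix (Fin n) (Fin n) ℂ) : Prop :=
  Hᴴ * H = (n : ℂ) • (1 : Matrix (Fin n) (Fin n) ℂ) ∧
  ∀ i j, ‖H i j‖ = 1

/-- A monomial unitary matrix: unitary, exactly one nonzero entry in each row and
each column, and each nonzero entry has modulus one. -/
def IsMonomialUnitary {n : ℕ} (P : Matrix (Fin n) (Fin n) ℂ) : Prop :=
  P ∈ Matrix.unitaryGroup (Fin n) ℂ ∧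
  (∀ i, ∃! j, P i j ≠ 0) ∧ (∀ j, ∃! i, P i j ≠ 0) ∧
  (∀ i j, P i j ≠ 0 → ‖P i j‖ = 1)

/-- Complex equivalence of `n × n` matrices. -/
def ComplexEquiv {n : ℕ} (U V : Matrix (Fin n) (Fin n) ℂ) : Prop :=
  ∃ P Q : Matrix (Fin n) (Fin n) ℂ,
    IsMonomialUnitary P ∧ IsMonomialUnitary Q ∧ U = P * V * Q

noncomputable def bjorckD : ℂ :=
  ⟨(1 - Real.sqrt 3) / 2, Real.sqrt (Real.sqrt 3 / 2)⟩

/-- First row of Björck's circulant matrix. -/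
noncomputable def bjorckRow : Fin 6 → ℂ :=
  ![1, Complex.I * bjorckD, -bjorckD, -Complex.I,
    -(starRingEnd ℂ bjorckD), Complex.I * starRingEnd ℂ bjorckD]

/-- Björck's circulant matrix , with  entry . -/
noncomputable def bjorckC6 : Matrix (Fin 6) (Fin 6) ℂ :=
  fun j k => bjorckRow (k - j)

private lemma bj_hns : Complex.normSq bjorckD = 1 := by
  have e : Complex.normSq bjorckD
      = ((1 - Real.sqrt 3)/2) * ((1 - Real.sqrt 3)/2)
        + Real.sqrt (Real.sqrt 3 / 2) * Real.sqrt (Real.sqrt 3 / 2) :=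
    Complex.normSq_mk _ _
  have h3 : Real.sqrt 3 ^ 2 = 3 := Real.sq_sqrt (by norm_num)
  have hh : Real.sqrt (Real.sqrt 3 / 2) ^ 2 = Real.sqrt 3 / 2 :=
    Real.sq_sqrt (by positivity)
  rw [e]; nlinarith [h3, hh]

private lemma bj_hzw : bjorckD * (starRingEnd ℂ) bjorckD = 1 := by
  rw [Complex.mul_conj, bj_hns]; norm_num

private lemma bj_hsum : bjorckD + (starRingEnd ℂ) bjorckD = 1 - (Real.sqrt 3 : ℂ) := by
  rw [Complex.add_conj]
  have : bjorckD.re = (1 - Real.sqrt 3) / 2 := rfl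
  rw [this]; push_cast; ring

private lemma bj_hc3 : (Real.sqrt 3 : ℂ)^2 = 3 := by
  norm_cast; exact Real.sq_sqrt (by norm_num)

private lemma bj_h2 : bjorckD^2 + ((starRingEnd ℂ) bjorckD)^2
    = 2*bjorckD + 2*(starRingEnd ℂ) bjorckD := by
  linear_combination (bjorckD + (starRingEnd ℂ) bjorckD + (1 - (Real.sqrt 3:ℂ)) - 2) * bj_hsum
    - 2*bj_hzw + bj_hc3

private lemma bj_habs : ‖bjorckD‖ = 1 := by
  have h := Complex.sq_norm bjorckD
  rw [bj_hns] at h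
  nlinarith [norm_nonneg bjorckD]

private lemma br0 : bjorckRow 0 = 1 := rfl
private lemma br1 : bjorckRow 1 = Complex.I * bjorckD := rfl
private lemma br2 : bjorckRow 2 = -bjorckD := rfl
private lemma br3 : bjorckRow 3 = -Complex.I := rfl
private lemma br4 : bjorckRow 4 = -(starRingEnd ℂ bjorckD) := rfl
private lemma br5 : bjorckRow 5 = Complex.I * starRingEnd ℂ bjorckD := rfl

private noncomputable def bjS (t : Fin 6) : ℂ :=
  ∑ m : Fin 6, (starRingEnd ℂ) (bjorckRow m) * bjorckRow (m + t)

private lemma bj_entry (i j : Fin 6) : (bjorckC6ᴴ * bjorckC6) i j = bjS (j - i) := by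
  simp only [Matrix.mul_apply, Matrix.conjTranspose_apply, bjorckC6, bjS]
  refine Fintype.sum_equiv (Equiv.subLeft i) _ _ fun k => ?_
  simp only [Equiv.subLeft_apply, starRingEnd_apply]
  have h : i - k + (j - i) = j - k := by abel
  rw [h]

private lemma bjS_val : ∀ t : Fin 6, bjS t = if t = 0 then 6 else 0 := by
  have w := bj_hzw
  have q := bj_h2
  intro t
  fin_cases t
  · show bjS 0 = 6
    simp only [bjS, Fin.sum_univ_six, show ((0:Fin 6)+0=0) from rfl,
      show ((1:Fin 6)+0=1) from rfl, show ((2:Fin 6)+0=2) from rfl,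
      show ((3:Fin 6)+0=3) from rfl, show ((4:Fin 6)+0=4) from rfl,
      show ((5:Fin 6)+0=5) from rfl, br0, br1, br2, br3, br4, br5,
      _root_.map_mul, _root_.map_one, _root_.map_neg, Complex.conj_conj, Complex.conj_I]
    linear_combination 4*w - (2*bjorckD*((starRingEnd ℂ) bjorckD) + 1) * Complex.I_sq
  · show bjS 1 = 0
    simp only [bjS, Fin.sum_univ_six, show ((0:Fin 6)+1=1) from rfl,
      show ((1:Fin 6)+1=2) from rfl, show ((2:Fin 6)+1=3) from rfl,
      show ((3:Fin 6)+1=4) from rfl, show ((4:Fin 6)+1=5) from rfl,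
      show ((5:Fin 6)+1=0) from by decide, br0, br1, br2, br3, br4, br5,
      _root_.map_mul, _root_.map_one, _root_.map_neg, Complex.conj_conj, Complex.conj_I]
    ring
  · show bjS 2 = 0
    simp only [bjS, Fin.sum_univ_six, show ((0:Fin 6)+2=2) from rfl,
      show ((1:Fin 6)+2=3) from rfl, show ((2:Fin 6)+2=4) from rfl,
      show ((3:Fin 6)+2=5) from rfl, show ((4:Fin 6)+2=0) from by decide,
      show ((5:Fin 6)+2=1) from by decide, br0, br1, br2, br3, br4, br5,
      _root_.map_mul, _root_.map_one, _root_.map_neg, Complex.conj_conj, Complex.conj_I]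
    linear_combination q + (2*((starRingEnd ℂ) bjorckD) - bjorckD^2) * Complex.I_sq
  · show bjS 3 = 0
    simp only [bjS, Fin.sum_univ_six, show ((0:Fin 6)+3=3) from rfl,
      show ((1:Fin 6)+3=4) from rfl, show ((2:Fin 6)+3=5) from rfl,
      show ((3:Fin 6)+3=0) from by decide, show ((4:Fin 6)+3=1) from by decide,
      show ((5:Fin 6)+3=2) from by decide, br0, br1, br2, br3, br4, br5,
      _root_.map_mul, _root_.map_one, _root_.map_neg, Complex.conj_conj, Complex.conj_I]
    ring
  · show bjS 4 = 0
    simp only [bjS, Fin.sum_univ_six, show ((0:Fin 6)+4=4) from rfl,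
      show ((1:Fin 6)+4=5) from rfl, show ((2:Fin 6)+4=0) from by decide,
      show ((3:Fin 6)+4=1) from by decide, show ((4:Fin 6)+4=2) from by decide,
      show ((5:Fin 6)+4=3) from by decide, br0, br1, br2, br3, br4, br5,
      _root_.map_mul, _root_.map_one, _root_.map_neg, Complex.conj_conj, Complex.conj_I]
    linear_combination q + (2*bjorckD - ((starRingEnd ℂ) bjorckD)^2) * Complex.I_sq
  · show bjS 5 = 0
    simp only [bjS, Fin.sum_univ_six, show ((0:Fin 6)+5=5) from rfl,
      show ((1:Fin 6)+5=0) from by decide, show ((2:Fin 6)+5=1) from by decide,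
      show ((3:Fin 6)+5=2) from by decide, show ((4:Fin 6)+5=3) from by decide,
      show ((5:Fin 6)+5=4) from by decide, br0, br1, br2, br3, br4, br5,
      _root_.map_mul, _root_.map_one, _root_.map_neg, Complex.conj_conj, Complex.conj_I]
    ring

theorem bjorck_is_CHM :
    ‖bjorckD‖ = 1 ∧ IsCHM 6 bjorckC6 := by
  refine ⟨bj_habs, ?_, ?_⟩
  · ext i j
    rw [bj_entry, bjS_val]
    by_cases h : i = j
    · subst h; simp
    · rw [if_neg (sub_ne_zero.mpr (Ne.symm h))]
      simp [Matrix.one_apply, h]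
  · intro i j
    show ‖bjorckRow (j - i)‖ = 1
    generalize j - i = m
    fin_cases m <;>
      simp [br0, br1, br2, br3, br4, br5, _root_.map_mul, Complex.norm_I, Complex.norm_conj, bj_habs]
end
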